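/- (Key induction in Appendix D, case 2.) Let A_s (s = 1,...,M) be increasing events of the form A_s = ∪_{t≤s} E_t where the E_t are pairwise disjoint, and suppose Pr(A_s | P ≤ α) is nondecreasing in α for each s. If E_{t} itself decomposes as a disjoint union Σ over I_t, then Pr(A_s | P ≤ sβ) + Pr(E_{s+1} | P ≤ (s+1)β) ≤ Pr(A_{s+1} | P ≤ (s+1)β) for each s < M, and hence Σ_{t=1}^{M} Pr(E_t | P ≤ tβ) ≤ Pr(A_M | P ≤ Mβ) ≤ 1. -/

import Mathlib

open MeasureTheory ProbabilityTheory

/-- The key induction in Appendix D, case (2) (Proposition 7.1 and inequality (20)),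
abstracted: for pairwise disjoint events `E t` with `A s = ⋃_{1 ≤ t ≤ s} E t`, if
`Pr(A s | P ≤ α)` is nondecreasing in `α`, then for every `1 ≤ s < M`
`Pr(A s | P ≤ sβ) + Pr(E (s+1) | P ≤ (s+1)β) ≤ Pr(A (s+1) | P ≤ (s+1)β)`, and hence
`Σ_{t=1}^M Pr(E t | P ≤ tβ) ≤ Pr(A M | P ≤ Mβ) ≤ 1`. -/
theorem stmt19 {Ω : Type*} [MeasurableSpace Ω] (μ : Measure Ω) [IsProbabilityMeasure μ]
    (M : ℕ) (hM : 1 ≤ M) (β : ℝ) (hβ : 0 < β) (hMβ : M * β ≤ 1)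
    (P : Ω → ℝ) (hPmeas : Measurable P)
    (hpos : ∀ α : ℝ, 0 < α → α ≤ 1 → μ {ω | P ω ≤ α} ≠ 0)
    (E : ℕ → Set Ω) (hEmeas : ∀ t, MeasurableSet (E t))
    (hdisj : ∀ t t', t ≠ t' → Disjoint (E t) (E t'))
    (A : ℕ → Set Ω) (hA : ∀ s, A s = ⋃ t ∈ Finset.Icc 1 s, E t)
    (hmono : ∀ s, ∀ α α' : ℝ, 0 < α → α ≤ α' →
      μ[|{ω | P ω ≤ α}] (A s) ≤ μ[|{ω | P ω ≤ α'}] (A s)) :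
    (∀ s : ℕ, 1 ≤ s → s < M →
      μ[|{ω | P ω ≤ s * β}] (A s) + μ[|{ω | P ω ≤ (s + 1) * β}] (E (s + 1))
        ≤ μ[|{ω | P ω ≤ (s + 1) * β}] (A (s + 1))) ∧
    (∑ t ∈ Finset.Icc 1 M, μ[|{ω | P ω ≤ t * β}] (E t)) ≤ μ[|{ω | P ω ≤ M * β}] (A M) ∧
    μ[|{ω | P ω ≤ M * β}] (A M) ≤ 1 := by
  -- A (s+1) = A s ∪ E (s+1)
  have hAsucc : ∀ s : ℕ, A (s + 1) = A s ∪ E (s + 1) := by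
    intro s
    rw [hA, hA]
    have : Finset.Icc 1 (s + 1) = insert (s + 1) (Finset.Icc 1 s) := by
      ext x; simp [Finset.mem_Icc]; omega
    rw [this, Finset.set_biUnion_insert, Set.union_comm]
  -- A s disjoint from E (s+1)
  have hAdisj : ∀ s : ℕ, Disjoint (A s) (E (s + 1)) := by
    intro s
    rw [hA]
    refine Set.disjoint_iUnion_left.2 fun t => Set.disjoint_iUnion_left.2 fun ht => ?_
    exact hdisj t (s + 1) (by simp at ht; omega)
  -- additivity under any conditional measure
  have hadd : ∀ (ν : Measure Ω) s, ν (A (s + 1)) = ν (A s) + ν (E (s + 1)) := by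
    intro ν s
    rw [hAsucc s, measure_union (hAdisj s) (hEmeas (s + 1))]
  have hsβpos : ∀ s : ℕ, 1 ≤ s → (0 : ℝ) < s * β := by
    intro s hs
    have : (1 : ℝ) ≤ s := by exact_mod_cast hs
    nlinarith
  -- key step inequality
  have hstep : ∀ s : ℕ, 1 ≤ s →
      μ[|{ω | P ω ≤ s * β}] (A s) + μ[|{ω | P ω ≤ (s + 1) * β}] (E (s + 1))
        ≤ μ[|{ω | P ω ≤ (s + 1) * β}] (A (s + 1)) := by
    intro s hs
    have h1 : μ[|{ω | P ω ≤ s * β}] (A s) ≤ μ[|{ω | P ω ≤ (s + 1) * β}] (A s) :=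
      hmono s _ _ (hsβpos s hs) (by nlinarith [hsβpos s hs])
    calc μ[|{ω | P ω ≤ s * β}] (A s) + μ[|{ω | P ω ≤ (s + 1) * β}] (E (s + 1))
        ≤ μ[|{ω | P ω ≤ (s + 1) * β}] (A s) + μ[|{ω | P ω ≤ (s + 1) * β}] (E (s + 1)) := by
          exact add_le_add_left h1 _
      _ = μ[|{ω | P ω ≤ (s + 1) * β}] (A (s + 1)) := (hadd _ s).symm
  -- main sum inequality by induction
  have hsum : ∀ n : ℕ, 1 ≤ n → n ≤ M →
      (∑ t ∈ Finset.Icc 1 n, μ[|{ω | P ω ≤ t * β}] (E t)) ≤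
        μ[|{ω | P ω ≤ n * β}] (A n) := by
    intro n
    induction n with
    | zero => omega
    | succ k ih =>
      intro _ hkM
      rcases Nat.eq_or_lt_of_le (Nat.one_le_iff_ne_zero.2 (Nat.succ_ne_zero k)) with h1 | h1
      · -- k = 0, base case
        have hk : k = 0 := by omega
        subst hk
        have : A 1 = E 1 := by
          rw [hA]; simp
        simp [this]
      · have hk1 : 1 ≤ k := by omega
        have hIcc : Finset.Icc 1 (k + 1) = insert (k + 1) (Finset.Icc 1 k) := by
          ext x; simp [Finset.mem_Icc]; omega
        rw [hIcc, Finset.sum_insert (by simp)]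
        have push : (↑(k + 1) : ℝ) = (k : ℝ) + 1 := by push_cast; ring
        rw [add_comm]
        calc (∑ t ∈ Finset.Icc 1 k, μ[|{ω | P ω ≤ t * β}] (E t))
              + μ[|{ω | P ω ≤ ↑(k + 1) * β}] (E (k + 1))
            ≤ μ[|{ω | P ω ≤ k * β}] (A k) + μ[|{ω | P ω ≤ ↑(k + 1) * β}] (E (k + 1)) := by
              exact add_le_add_left (ih hk1 (by omega)) _
          _ ≤ μ[|{ω | P ω ≤ ↑(k + 1) * β}] (A (k + 1)) := by
              rw [push]; exact hstep k hk1
  refine ⟨fun s hs _ => hstep s hs, hsum M hM le_rfl, ?_⟩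
  have hMβpos : (0 : ℝ) < M * β := hsβpos M hM
  have : IsProbabilityMeasure (μ[|{ω | P ω ≤ (M : ℝ) * β}]) :=
    cond_isProbabilityMeasure (hpos _ hMβpos hMβ)
  exact prob_le_one
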